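/- Let C̄ ∈ {0,1}^{N×N} be the adjacency matrix of the directed cycle with self-loops on N vertices, and for 1 ≤ k ≤ N−1 let Ā_k ∈ {0,1}^{N×N} be the structural matrix of C̄^k (i.e., (Ā_k)_{n,l} = 1 iff the (n,l) entry of the nonnegative matrix power C̄^k is nonzero). Then the ordered pair (Ā_k, C̄) is compatible, i.e., both matrices have all diagonal entries equal to 1 and E(C̄) ⊆ E(Ā_k), and the product Ā_k C̄ is a simple extension of (Ā_k, C̄): for every (m,l) ∈ E(C̄), the set {(n,l) ∈ E(Ā_k C̄) \ E(Ā_k) : (Ā_k)_{n,m} C̄_{m,l} ≠ 0} has at most one element. -/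
import Mathlib


open Matrix

/-- The support `E(M)` of a matrix: the set of index pairs where `M` is nonzero. -/
def Esupp {N : ℕ} (M : Matrix (Fin N) (Fin N) ℝ) : Set (Fin N × Fin N) :=
  {p | M p.1 p.2 ≠ 0}

/-- An ordered pair `(A, B)` of 0-1 matrices is compatible if both are 0-1 matrices with
all diagonal entries equal to 1 and `E(B) ⊆ E(A)`. -/
def Compatible {N : ℕ} (A B : Matrix (Fin N) (Fin N) ℝ) : Prop :=
  (∀ n l, A n l = 0 ∨ A n l = 1) ∧ (∀ n l, B n l = 0 ∨ B n l = 1) ∧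
    (∀ n, A n n = 1) ∧ (∀ n, B n n = 1) ∧ Esupp B ⊆ Esupp A

/-- For a pair `(A, B)` and `(m, l) ∈ E(B)`, the set
`β_{(m,l)}(B) = {(n,l) ∈ E(AB) \ E(A) : A_{n,m} B_{m,l} ≠ 0}`. -/
def betaSet {N : ℕ} (A B : Matrix (Fin N) (Fin N) ℝ) (m l : Fin N) :
    Set (Fin N × Fin N) :=
  {p | p ∈ Esupp (A * B) \ Esupp A ∧ p.2 = l ∧ A p.1 m * B m l ≠ 0}

/-- The product `A * B` is a simple extension of the compatible pair `(A, B)` if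
`|β_{(m,l)}(B)| ≤ 1` for every `(m, l) ∈ E(B)`. -/
def SimpleExtension {N : ℕ} (A B : Matrix (Fin N) (Fin N) ℝ) : Prop :=
  ∀ m l : Fin N, B m l ≠ 0 → (betaSet A B m l).Subsingleton

/-- Adjacency matrix of the directed cycle with self-loops on `N` vertices:
entry `(n, l)` is `1` iff `l = n` or `l = n + 1 (mod N)`. -/
def cycleMat (N : ℕ) : Matrix (Fin N) (Fin N) ℝ :=
  Matrix.of fun n l => if l = n ∨ (l : ℕ) = ((n : ℕ) + 1) % N then 1 else 0

/-- The structural (0-1) matrix of a real matrix `M`: entry `1` where `M` is nonzero and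
`0` elsewhere. -/
noncomputable def structMat {N : ℕ} (M : Matrix (Fin N) (Fin N) ℝ) :
    Matrix (Fin N) (Fin N) ℝ :=
  Matrix.of fun n l => if M n l = 0 then 0 else 1

section Aux

lemma mod2 {x N : ℕ} (hN : 0 < N) (h : x < 2 * N) :
    x % N = if x < N then x else x - N := by
  split
  · exact Nat.mod_eq_of_lt ‹_›
  · rw [Nat.mod_eq_sub_mod (by omega)]
    exact Nat.mod_eq_of_lt (by omega)

lemma delta_add {N a b c : ℕ} (ha : a < N) (hb : b < N) (hc : c < N) :
    ((b + N - a) % N + (c + N - b) % N) % N = (c + N - a) % N := by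
  have h1 : (b + N - a) + (c + N - b) = (c + N - a) + N := by omega
  calc ((b + N - a) % N + (c + N - b) % N) % N
      = ((b + N - a) + (c + N - b)) % N := (Nat.add_mod _ _ _).symm
    _ = ((c + N - a) + N) % N := by rw [h1]
    _ = (c + N - a) % N := Nat.add_mod_right _ _

variable {N : ℕ}

lemma cycle_mem (n l : Fin N) :
    cycleMat N n l = if l = n ∨ (l : ℕ) = ((n : ℕ) + 1) % N then 1 else 0 := rfl

lemma cycle_nonneg (n l : Fin N) : 0 ≤ cycleMat N n l := by
  rw [cycle_mem]; split <;> norm_num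

lemma cycle_ne_zero (hN : 2 ≤ N) (m l : Fin N) :
    cycleMat N m l ≠ 0 ↔ ((l : ℕ) + N - (m : ℕ)) % N ≤ 1 := by
  have hm := m.isLt; have hl := l.isLt
  rw [cycle_mem, ite_ne_right_iff, Fin.ext_iff,
      mod2 (x := (l : ℕ) + N - (m : ℕ)) (by omega) (by omega),
      mod2 (x := (m : ℕ) + 1) (by omega) (by omega)]
  rw [and_iff_left (one_ne_zero (α := ℝ))]
  split_ifs <;> omega

lemma cyclePow_nonneg (k : ℕ) (n l : Fin N) : 0 ≤ (cycleMat N ^ k) n l := by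
  induction k generalizing n l with
  | zero =>
    rw [pow_zero, Matrix.one_apply]; split <;> norm_num
  | succ k ih =>
    rw [pow_succ, Matrix.mul_apply]
    exact Finset.sum_nonneg fun m _ => mul_nonneg (ih n m) (cycle_nonneg m l)

lemma sum_mul_ne_zero {f g : Fin N → ℝ} (hf : ∀ i, 0 ≤ f i) (hg : ∀ i, 0 ≤ g i) :
    (∑ i, f i * g i) ≠ 0 ↔ ∃ i, f i ≠ 0 ∧ g i ≠ 0 := by
  have h : (∑ i, f i * g i) = 0 ↔ ∀ i ∈ Finset.univ, f i * g i = 0 :=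
    Finset.sum_eq_zero_iff_of_nonneg fun i _ => mul_nonneg (hf i) (hg i)
  simp only [Finset.mem_univ, true_implies, mul_eq_zero] at h
  rw [ne_eq, h]
  push_neg
  rfl

lemma step_iff (hN : 2 ≤ N) (k : ℕ) (n l : Fin N) :
    (∃ m : Fin N, ((m : ℕ) + N - (n : ℕ)) % N ≤ k ∧
      ((l : ℕ) + N - (m : ℕ)) % N ≤ 1) ↔ ((l : ℕ) + N - (n : ℕ)) % N ≤ k + 1 := by
  have hn := n.isLt; have hl := l.isLt
  constructor
  · rintro ⟨m, h1, h2⟩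
    have h3 := delta_add (N := N) hn m.isLt hl
    have h4 := Nat.mod_le (((m : ℕ) + N - (n : ℕ)) % N + ((l : ℕ) + N - (m : ℕ)) % N) N
    omega
  · intro hz
    by_cases hz0 : ((l : ℕ) + N - (n : ℕ)) % N = 0
    · refine ⟨n, ?_, ?_⟩
      · have : ((n : ℕ) + N - (n : ℕ)) % N = N % N := by congr 1; omega
        rw [this, Nat.mod_self]; omega
      · omega
    · have hb : ((l : ℕ) + N - 1) % N < N := Nat.mod_lt _ (by omega)
      have hbv : ((l : ℕ) + N - 1) % N = if (l : ℕ) + N - 1 < N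
          then (l : ℕ) + N - 1 else (l : ℕ) + N - 1 - N := mod2 (by omega) (by omega)
      rw [mod2 (x := (l : ℕ) + N - (n : ℕ)) (by omega) (by omega)] at hz hz0
      have key1 : (((l : ℕ) + N - 1) % N + N - (n : ℕ)) % N ≤ k := by
        rw [mod2 (x := ((l : ℕ) + N - 1) % N + N - (n : ℕ)) (by omega) (by omega)]
        split_ifs at * <;> omega
      have key2 : ((l : ℕ) + N - ((l : ℕ) + N - 1) % N) % N ≤ 1 := by
        rw [mod2 (x := (l : ℕ) + N - ((l : ℕ) + N - 1) % N) (by omega) (by omega)]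
        split_ifs at * <;> omega
      exact ⟨⟨((l : ℕ) + N - 1) % N, hb⟩, key1, key2⟩

lemma cyclePow_ne_zero (hN : 2 ≤ N) (k : ℕ) (n l : Fin N) :
    (cycleMat N ^ k) n l ≠ 0 ↔ ((l : ℕ) + N - (n : ℕ)) % N ≤ k := by
  induction k generalizing n l with
  | zero =>
    have hn := n.isLt; have hl := l.isLt
    rw [pow_zero, Matrix.one_apply, ite_ne_right_iff, Fin.ext_iff,
        mod2 (x := (l : ℕ) + N - (n : ℕ)) (by omega) (by omega)]
    rw [and_iff_left (one_ne_zero (α := ℝ))]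
    split_ifs <;> omega
  | succ k ih =>
    rw [pow_succ, Matrix.mul_apply,
        sum_mul_ne_zero (fun i => cyclePow_nonneg k n i) (fun i => cycle_nonneg i l),
        ← step_iff hN k n l]
    exact exists_congr fun m => and_congr (ih n m) (cycle_ne_zero hN m l)

lemma struct_ne_zero {M : Matrix (Fin N) (Fin N) ℝ} (n l : Fin N) :
    structMat M n l ≠ 0 ↔ M n l ≠ 0 := by
  simp only [structMat, Matrix.of_apply]
  by_cases h : M n l = 0 <;> simp [h]

end Aux

/-- For the directed cycle with self-loops `C̄` on `N` vertices and
`1 ≤ k ≤ N - 1`, let `Ā_k` be the structural matrix of the nonnegative power `C̄^k`.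
Then the ordered pair `(Ā_k, C̄)` is compatible and the product `Ā_k * C̄` is a simple
extension of `(Ā_k, C̄)`. -/
theorem cycle_pow_compatible_simpleExtension (N k : ℕ) (hk1 : 1 ≤ k) (hkN : k ≤ N - 1) :
    Compatible (structMat (cycleMat N ^ k)) (cycleMat N) ∧
    SimpleExtension (structMat (cycleMat N ^ k)) (cycleMat N) := by
  have hN : 2 ≤ N := by
    rcases Nat.lt_or_ge N 2 with h | h
    · omega
    · exact h
  set C := cycleMat N with hC
  set A := structMat (C ^ k) with hA
  have hAsupp : ∀ n l : Fin N, A n l ≠ 0 ↔ ((l : ℕ) + N - (n : ℕ)) % N ≤ k := by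
    intro n l
    rw [hA, struct_ne_zero, cyclePow_ne_zero hN]
  have hA01 : ∀ n l : Fin N, A n l = 0 ∨ A n l = 1 := by
    intro n l
    simp only [hA, structMat, Matrix.of_apply]
    split <;> simp
  have hC01 : ∀ n l : Fin N, C n l = 0 ∨ C n l = 1 := by
    intro n l
    rw [hC, cycle_mem]
    split <;> simp
  have hAnn : ∀ i j : Fin N, 0 ≤ A i j := by
    intro i j; rcases hA01 i j with h | h <;> rw [h] <;> norm_num
  have hACsupp : ∀ n l : Fin N, (A * C) n l ≠ 0 ↔
      ((l : ℕ) + N - (n : ℕ)) % N ≤ k + 1 := by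
    intro n l
    rw [Matrix.mul_apply,
        sum_mul_ne_zero (fun i => hAnn n i) (fun i => cycle_nonneg i l),
        ← step_iff hN k n l]
    exact exists_congr fun m => and_congr (hAsupp n m) (cycle_ne_zero hN m l)
  refine ⟨⟨hA01, hC01, ?_, ?_, ?_⟩, ?_⟩
  · intro n
    have h : A n n ≠ 0 := by
      rw [hAsupp]
      have : ((n : ℕ) + N - (n : ℕ)) % N = N % N := by congr 1; omega
      rw [this, Nat.mod_self]; omega
    rcases hA01 n n with h0 | h1
    · exact absurd h0 h
    · exact h1
  · intro n
    rw [hC, cycle_mem, if_pos (Or.inl rfl)]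
  · intro p hp
    have h1 : C p.1 p.2 ≠ 0 := hp
    rw [hC, cycle_ne_zero hN] at h1
    show A p.1 p.2 ≠ 0
    rw [hAsupp]
    omega
  · intro m l hml p hp q hq
    obtain ⟨⟨hpAC, hpA⟩, hpl, -⟩ := hp
    obtain ⟨⟨hqAC, hqA⟩, hql, -⟩ := hq
    have hp1 : ((l : ℕ) + N - (p.1 : ℕ)) % N ≤ k + 1 := by
      have := (hACsupp p.1 p.2).mp hpAC; rwa [hpl] at this
    have hp2 : ¬ ((l : ℕ) + N - (p.1 : ℕ)) % N ≤ k := by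
      intro h
      exact hpA ((hAsupp p.1 p.2).mpr (by rwa [hpl]))
    have hq1 : ((l : ℕ) + N - (q.1 : ℕ)) % N ≤ k + 1 := by
      have := (hACsupp q.1 q.2).mp hqAC; rwa [hql] at this
    have hq2 : ¬ ((l : ℕ) + N - (q.1 : ℕ)) % N ≤ k := by
      intro h
      exact hqA ((hAsupp q.1 q.2).mpr (by rwa [hql]))
    have ha := p.1.isLt; have ha' := q.1.isLt; have hl := l.isLt
    have heq : ((l : ℕ) + N - (p.1 : ℕ)) % N = ((l : ℕ) + N - (q.1 : ℕ)) % N := by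
      omega
    rw [mod2 (x := (l : ℕ) + N - (p.1 : ℕ)) (by omega) (by omega),
        mod2 (x := (l : ℕ) + N - (q.1 : ℕ)) (by omega) (by omega)] at heq
    have hval : (p.1 : Fin N) = q.1 := by
      apply Fin.ext
      split_ifs at heq <;> omega
    exact Prod.ext hval (hpl.trans hql.symm)
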